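/- Assume g(s) > 0 for all s ∈ (0, Δ). Then for every integer m ≥ 0, J_m(t₀, …, t_m) > 0 for every tuple with t_j > 0 for all j, Σ_{j=0}^{m−1} t_j < Δ, and t_m < τ (for m = 0 this reads: J_0(t₀) > 0 for all t₀ ∈ (0, τ)). In particular the joint interspike-interval density is strictly positive on its domain of validity. -/

import Mathlib

open Real Set Filter MeasureTheory

/-- Conditional ISI density `F t s` given time-to-live `s` of the feedback impulse. -/
noncomputable def F (lam τ t s : ℝ) : ℝ :=
  if 0 < t ∧ t < s then lam ^ 2 * t * Real.exp (-lam * t)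
  else if s ≤ t ∧ t ≤ s + τ then
    (1 + lam * s) * Real.exp (-lam * s) * (lam ^ 2 * (t - s) * Real.exp (-lam * (t - s)))
  else 0

/-- Regular part of the stationary time-to-live density. -/
noncomputable def g (lam A B s : ℝ) : ℝ := A + B * Real.exp (2 * lam * s)

/-- Weight of the singular (Dirac) part of the stationary time-to-live distribution. -/
noncomputable def aC (lam Δ : ℝ) : ℝ :=
  4 * Real.exp (2 * lam * Δ) / ((3 + 2 * lam * Δ) * Real.exp (2 * lam * Δ) + 1)

/-- `T t p q = Σ_{j=p}^{q-1} t_j` (empty sums are `0`). -/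
def T {n : ℕ} (t : Fin n → ℝ) (p q : ℕ) : ℝ :=
  ∑ j : Fin n, if p ≤ (j : ℕ) ∧ (j : ℕ) < q then t j else 0

/-- `Ilow lam Δ τ A B i t` is the term `I_i`, `0 ≤ i ≤ m-1`, of the joint ISI density. -/
noncomputable def Ilow (lam Δ τ A B : ℝ) {m : ℕ} (i : ℕ) (t : Fin (m + 1) → ℝ) : ℝ :=
  (∏ k : Fin (m + 1), if i + 1 ≤ (k : ℕ) then F lam τ (t k) (Δ - T t (i + 1) (k : ℕ)) else 1) *
    ∫ s in T t 0 i..T t 0 (i + 1),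
      g lam A B s *
        ∏ k : Fin (m + 1), if (k : ℕ) ≤ i then F lam τ (t k) (s - T t 0 (k : ℕ)) else 1

/-- `Itop lam Δ τ A B t` is the term `I_m` of the joint ISI density. -/
noncomputable def Itop (lam Δ τ A B : ℝ) {m : ℕ} (t : Fin (m + 1) → ℝ) : ℝ :=
  (∫ s in T t 0 m..Δ, g lam A B s * ∏ k : Fin (m + 1), F lam τ (t k) (s - T t 0 (k : ℕ)))
    + aC lam Δ * ∏ k : Fin (m + 1), F lam τ (t k) (Δ - T t 0 (k : ℕ))

/-- `J lam Δ τ A B t = Σ_{i=0}^{m} I_i(t)`, the joint density of `m+1` consecutive ISIs. -/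
noncomputable def J (lam Δ τ A B : ℝ) {m : ℕ} (t : Fin (m + 1) → ℝ) : ℝ :=
  (∑ i ∈ Finset.range m, Ilow lam Δ τ A B i t) + Itop lam Δ τ A B t

lemma F_nonneg {lam τ t s : ℝ} (hlam : 0 < lam) (hs : 0 ≤ s) : 0 ≤ F lam τ t s := by
  unfold F
  split_ifs with h1 h2
  · have := h1.1
    positivity
  · have h0 : 0 ≤ t - s := sub_nonneg.2 h2.1
    have h1s : 0 ≤ 1 + lam * s := by positivity
    have := Real.exp_nonneg (-lam * s)
    have := Real.exp_nonneg (-lam * (t - s))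
    positivity
  · exact le_rfl

lemma F_pos_lt {lam τ t s : ℝ} (hlam : 0 < lam) (ht : 0 < t) (hts : t < s) :
    0 < F lam τ t s := by
  unfold F
  rw [if_pos ⟨ht, hts⟩]
  have := Real.exp_pos (-lam * t)
  positivity

lemma F_pos_ge {lam τ t s : ℝ} (hlam : 0 < lam) (hs : 0 ≤ s) (hst : s < t) (htτ : t ≤ s + τ) :
    0 < F lam τ t s := by
  unfold F
  rw [if_neg (by rintro ⟨-, h⟩; exact absurd h (not_lt.2 hst.le)),
      if_pos ⟨hst.le, htτ⟩]
  have h1s : 0 < 1 + lam * s := by positivity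
  have h0 : 0 < t - s := sub_pos.2 hst
  have := Real.exp_pos (-lam * s)
  have := Real.exp_pos (-lam * (t - s))
  positivity

lemma F_le {lam τ t s : ℝ} (hlam : 0 < lam) (hs : 0 ≤ s) :
    F lam τ t s ≤ lam ^ 2 * |t| := by
  unfold F
  split_ifs with h1 h2
  · have h2 : Real.exp (-lam * t) ≤ 1 := by
      rw [Real.exp_le_one_iff]
      nlinarith [h1.1]
    calc lam ^ 2 * t * Real.exp (-lam * t) ≤ lam ^ 2 * t * 1 :=
          mul_le_mul_of_nonneg_left h2 (by nlinarith [h1.1, sq_nonneg lam])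
      _ ≤ lam ^ 2 * |t| := by rw [mul_one]; nlinarith [le_abs_self t, sq_nonneg lam]
  · have ht : 0 ≤ t := hs.trans h2.1
    have hb : (1 + lam * s) * Real.exp (-lam * s) ≤ 1 := by
      rw [neg_mul, Real.exp_neg]
      have hle := Real.add_one_le_exp (lam * s)
      have he := Real.exp_pos (lam * s)
      calc (1 + lam * s) * (Real.exp (lam * s))⁻¹
          ≤ Real.exp (lam * s) * (Real.exp (lam * s))⁻¹ :=
            mul_le_mul_of_nonneg_right (by linarith) (by positivity)
        _ = 1 := mul_inv_cancel₀ he.ne'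
    have he2 : Real.exp (-lam * (t - s)) ≤ 1 := by
      rw [Real.exp_le_one_iff]
      nlinarith [sub_nonneg.2 h2.1]
    have hts : 0 ≤ t - s := sub_nonneg.2 h2.1
    have h1s : 0 ≤ 1 + lam * s := by positivity
    calc (1 + lam * s) * Real.exp (-lam * s) * (lam ^ 2 * (t - s) * Real.exp (-lam * (t - s)))
        ≤ 1 * (lam ^ 2 * (t - s) * 1) := by
          apply mul_le_mul hb (mul_le_mul_of_nonneg_left he2 (by positivity)) (by positivity) zero_le_one
      _ ≤ lam ^ 2 * |t| := by
          rw [one_mul, mul_one]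
          nlinarith [le_abs_self t, sq_nonneg lam]
  · positivity

lemma F_meas (lam τ t : ℝ) : Measurable (F lam τ t) := by
  unfold F
  apply Measurable.ite
  · by_cases ht : 0 < t
    · simp only [ht, true_and]
      exact measurableSet_Ioi
    · simp [ht]
  · exact measurable_const
  · apply Measurable.ite
    · have : {s : ℝ | s ≤ t ∧ t ≤ s + τ} = Set.Iic t ∩ Set.Ici (t - τ) := by
        ext s
        simp only [Set.mem_setOf_eq, Set.mem_inter_iff, Set.mem_Iic, Set.mem_Ici]
        constructor <;> (rintro ⟨h1, h2⟩; exact ⟨h1, by linarith⟩)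
      rw [this]
      exact measurableSet_Iic.inter measurableSet_Ici
    · fun_prop
    · exact measurable_const

lemma g_meas (lam A B : ℝ) : Measurable (g lam A B) := by unfold g; fun_prop

lemma T_nonneg {n : ℕ} (t : Fin n → ℝ) (ht : ∀ j, 0 < t j) (p q : ℕ) : 0 ≤ T t p q :=
  Finset.sum_nonneg fun j _ => by split_ifs; exacts [(ht j).le, le_rfl]

lemma T_mono {n : ℕ} (t : Fin n → ℝ) (ht : ∀ j, 0 < t j) (p : ℕ) {q q' : ℕ} (h : q ≤ q') :
    T t p q ≤ T t p q' := by
  apply Finset.sum_le_sum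
  intro j _
  split_ifs with h1 h2 <;>
    first
      | exact le_rfl
      | exact (ht j).le
      | exact absurd ⟨h1.1, lt_of_lt_of_le h1.2 h⟩ h2

lemma T_anti {n : ℕ} (t : Fin n → ℝ) (ht : ∀ j, 0 < t j) {p p' : ℕ} (h : p' ≤ p) (q : ℕ) :
    T t p q ≤ T t p' q := by
  apply Finset.sum_le_sum
  intro j _
  split_ifs with h1 h2 <;>
    first
      | exact le_rfl
      | exact (ht j).le
      | exact absurd ⟨le_trans h h1.1, h1.2⟩ h2

lemma T_succ {n : ℕ} (t : Fin n → ℝ) (k : Fin n) :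
    T t 0 ((k : ℕ) + 1) = T t 0 (k : ℕ) + t k := by
  have key : ∀ j : Fin n, (if 0 ≤ (j : ℕ) ∧ (j : ℕ) < (k : ℕ) + 1 then t j else 0)
      = (if 0 ≤ (j : ℕ) ∧ (j : ℕ) < (k : ℕ) then t j else 0) + (if j = k then t j else 0) := by
    intro j
    by_cases hjk : j = k
    · subst hjk; simp
    · have hne : (j : ℕ) ≠ (k : ℕ) := fun h => hjk (Fin.ext h)
      by_cases hlt : (j : ℕ) < (k : ℕ)
      · simp [hlt, Nat.lt_succ_of_lt hlt, hjk]
      · have h2 : ¬ (j : ℕ) < (k : ℕ) + 1 := by omega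
        simp [hlt, h2, hjk]
  unfold T
  simp only [key, Finset.sum_add_distrib]
  congr 1
  simp

lemma ae_ne_restrict (S : Set ℝ) (p : ℝ) : ∀ᵐ s ∂(volume.restrict S), s ≠ p := by
  rw [ae_iff]
  have h1 : {s : ℝ | ¬ s ≠ p} = {p} := by ext s; simp
  rw [h1, Measure.restrict_apply (measurableSet_singleton p)]
  exact measure_mono_null Set.inter_subset_left Real.volume_singleton


/-- if `g > 0` on `(0, Δ)`, then for every `m ≥ 0` the joint density `J_m`
is strictly positive on its domain of validity
`{t_j > 0 ∀ j, Σ_{j=0}^{m−1} t_j < Δ, t_m < τ}` (for `m = 0` this is `J_0 > 0` on `(0,τ)`). -/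
theorem stmt13 (lam Δ τ A B : ℝ) (hlam : 0 < lam) (hΔ : 0 < Δ) (hΔτ : Δ < τ)
    (hg : ∀ s ∈ Set.Ioo (0 : ℝ) Δ, 0 < g lam A B s) :
    ∀ m : ℕ, ∀ t : Fin (m + 1) → ℝ,
      (∀ j, 0 < t j) → T t 0 m < Δ → t (Fin.last m) < τ →
        0 < J lam Δ τ A B t := by
  intro m t ht hT hτ
  have ha0nn : 0 ≤ T t 0 m := T_nonneg t ht 0 m
  have hIlow : ∀ i ∈ Finset.range m, 0 ≤ Ilow lam Δ τ A B i t := by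
    intro i hi
    have him : i < m := Finset.mem_range.1 hi
    unfold Ilow
    apply mul_nonneg
    · apply Finset.prod_nonneg
      intro k _
      split_ifs with hk
      · apply F_nonneg hlam
        have h1 : T t (i+1) (k:ℕ) ≤ T t 0 (k:ℕ) := T_anti t ht (Nat.zero_le _) _
        have h2 : T t 0 (k:ℕ) ≤ T t 0 m := T_mono t ht 0 (Nat.lt_succ_iff.1 k.isLt)
        linarith
      · exact zero_le_one
    · have hab : T t 0 i ≤ T t 0 (i+1) := T_mono t ht 0 (Nat.le_succ i)
      apply intervalIntegral.integral_nonneg_of_ae_restrict hab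
      filter_upwards [ae_restrict_mem measurableSet_Icc,
        ae_ne_restrict (Set.Icc (T t 0 i) (T t 0 (i+1))) (T t 0 i)] with s hs hsne
      have hs1 : T t 0 i < s := lt_of_le_of_ne hs.1 (Ne.symm hsne)
      have hs0 : 0 < s := lt_of_le_of_lt (T_nonneg t ht 0 i) hs1
      have hsΔ : s < Δ :=
        lt_of_le_of_lt (hs.2.trans (T_mono t ht 0 (Nat.succ_le_of_lt him))) hT
      apply mul_nonneg (hg s ⟨hs0, hsΔ⟩).le
      apply Finset.prod_nonneg
      intro k _
      split_ifs with hk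
      · apply F_nonneg hlam
        have : T t 0 (k:ℕ) ≤ T t 0 i := T_mono t ht 0 hk
        linarith
      · exact zero_le_one
  have hItop : 0 < Itop lam Δ τ A B t := by
    unfold Itop
    set a0 := T t 0 m with ha0def
    set f : ℝ → ℝ := fun s => g lam A B s * ∏ k : Fin (m+1), F lam τ (t k) (s - T t 0 (k:ℕ))
      with hfdef
    have hmeas : Measurable f := by
      apply (g_meas lam A B).mul
      apply Finset.measurable_prod
      intro k _
      exact (F_meas lam τ (t k)).comp (measurable_id.sub_const _)
    have hFarg : ∀ {s : ℝ}, a0 < s → ∀ k : Fin (m+1), 0 ≤ s - T t 0 (k:ℕ) := by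
      intro s hs k
      have : T t 0 (k:ℕ) ≤ a0 := T_mono t ht 0 (Nat.lt_succ_iff.1 k.isLt)
      linarith
    have hnonneg : ∀ s ∈ Set.Ioo a0 Δ, 0 ≤ f s := by
      intro s hs
      have hs0 : 0 < s := lt_of_le_of_lt ha0nn hs.1
      apply mul_nonneg (hg s ⟨hs0, hs.2⟩).le
      exact Finset.prod_nonneg fun k _ => F_nonneg hlam (hFarg hs.1 k)
    have hpos : ∀ s ∈ Set.Ioo a0 Δ, s ≠ a0 + t (Fin.last m) → 0 < f s := by
      intro s hs hsne
      have hs0 : 0 < s := lt_of_le_of_lt ha0nn hs.1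
      apply mul_pos (hg s ⟨hs0, hs.2⟩)
      apply Finset.prod_pos
      intro k _
      by_cases hk : (k:ℕ) < m
      · apply F_pos_lt hlam (ht k)
        have h1 : T t 0 ((k:ℕ)+1) ≤ a0 := T_mono t ht 0 (Nat.succ_le_of_lt hk)
        have h2 := T_succ t k
        linarith [hs.1]
      · have hkm : (k:ℕ) = m := by have := k.isLt; omega
        have hkl : k = Fin.last m := Fin.ext hkm
        have hTk : T t 0 (k:ℕ) = a0 := by rw [hkm]
        rw [hTk]
        rcases lt_trichotomy (t k) (s - a0) with h | h | h
        · exact F_pos_lt hlam (ht k) h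
        · exact absurd (by rw [← hkl]; linarith) hsne
        · apply F_pos_ge hlam (by linarith [hs.1]) h
          have htk : t k < τ := hkl ▸ hτ
          linarith [hs.1]
    have hbound : ∀ s ∈ Set.Ioc a0 Δ, ‖f s‖ ≤
        (|A| + |B| * Real.exp (2*lam*Δ)) * ∏ k : Fin (m+1), (lam^2 * |t k|) := by
      intro s hs
      have hFnn : ∀ k : Fin (m+1), 0 ≤ F lam τ (t k) (s - T t 0 (k:ℕ)) :=
        fun k => F_nonneg hlam (hFarg hs.1 k)
      have hgle : |g lam A B s| ≤ |A| + |B| * Real.exp (2*lam*Δ) := by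
        unfold g
        calc |A + B * Real.exp (2*lam*s)| ≤ |A| + |B * Real.exp (2*lam*s)| := abs_add_le _ _
          _ = |A| + |B| * Real.exp (2*lam*s) := by
              rw [abs_mul, abs_of_pos (Real.exp_pos _)]
          _ ≤ |A| + |B| * Real.exp (2*lam*Δ) := by
              have h1 : Real.exp (2*lam*s) ≤ Real.exp (2*lam*Δ) :=
                Real.exp_le_exp.2 (by nlinarith [hs.2])
              nlinarith [abs_nonneg B]
      have hprodnn : 0 ≤ ∏ k : Fin (m+1), F lam τ (t k) (s - T t 0 (k:ℕ)) :=
        Finset.prod_nonneg fun k _ => hFnn k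
      simp only [hfdef]
      rw [Real.norm_eq_abs, abs_mul, abs_of_nonneg hprodnn]
      apply mul_le_mul hgle ?_ hprodnn (by positivity)
      exact Finset.prod_le_prod (fun k _ => hFnn k) (fun k _ => F_le hlam (hFarg hs.1 k))
    have hintOn : IntegrableOn f (Set.Ioc a0 Δ) := by
      apply MeasureTheory.Integrable.mono'
        (integrableOn_const (C := (|A| + |B| * Real.exp (2*lam*Δ)) * ∏ k : Fin (m+1), (lam^2 * |t k|)) measure_Ioc_lt_top.ne) hmeas.aestronglyMeasurable
      filter_upwards [ae_restrict_mem measurableSet_Ioc] with s hs using hbound s hs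
    have hintpos : 0 < ∫ s in a0..Δ, f s := by
      rw [intervalIntegral.integral_of_le hT.le]
      have hae : 0 ≤ᵐ[volume.restrict (Set.Ioc a0 Δ)] f := by
        filter_upwards [ae_restrict_mem measurableSet_Ioc,
          ae_ne_restrict (Set.Ioc a0 Δ) Δ] with s hs hsne
        exact hnonneg s ⟨hs.1, lt_of_le_of_ne hs.2 hsne⟩
      rw [MeasureTheory.integral_pos_iff_support_of_nonneg_ae hae hintOn]
      have hsub : Set.Ioo a0 Δ \ {a0 + t (Fin.last m)} ⊆ Function.support f :=
        fun s hs => (hpos s hs.1 (by simpa using hs.2)).ne'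
      have hlt : (0:ENNReal) <
          volume.restrict (Set.Ioc a0 Δ) (Set.Ioo a0 Δ \ {a0 + t (Fin.last m)}) := by
        rw [Measure.restrict_apply' measurableSet_Ioc]
        have heq : (Set.Ioo a0 Δ \ {a0 + t (Fin.last m)}) ∩ Set.Ioc a0 Δ
            = Set.Ioo a0 Δ \ {a0 + t (Fin.last m)} :=
          Set.inter_eq_left.2 (Set.diff_subset.trans Set.Ioo_subset_Ioc_self)
        rw [heq, measure_diff_null Real.volume_singleton, Real.volume_Ioo]
        exact ENNReal.ofReal_pos.2 (sub_pos.2 hT)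
      exact lt_of_lt_of_le hlt (measure_mono hsub)
    have haCnn : 0 ≤ aC lam Δ * ∏ k : Fin (m+1), F lam τ (t k) (Δ - T t 0 (k:ℕ)) := by
      apply mul_nonneg
      · unfold aC
        apply div_nonneg (by positivity)
        nlinarith [Real.exp_pos (2*lam*Δ), mul_pos hlam hΔ]
      · refine Finset.prod_nonneg fun k _ => F_nonneg hlam ?_
        have : T t 0 (k:ℕ) ≤ T t 0 m := T_mono t ht 0 (Nat.lt_succ_iff.1 k.isLt)
        linarith
    linarith
  have hsum : 0 ≤ ∑ i ∈ Finset.range m, Ilow lam Δ τ A B i t := Finset.sum_nonneg hIlow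
  unfold J
  linarith
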